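/- Let (a,b) be a fictitious-play trajectory. Then for every horizon T ≥ 5: |(1/T)·Σ_{t=1}^T u_A^t − 1/2| ≤ 2√10/√T and |(1/T)·Σ_{t=1}^T u_B^t − 1/2| ≤ √10/√T. -/

import Mathlib

open MeasureTheory

/-- Bob's choice of the left or right piece. -/
inductive Choice
  | L
  | R
deriving DecidableEq

/-- The cumulative valuation `V(x) = ∫_0^x v`. -/
noncomputable def cumul (v : ℝ → ℝ) (x : ℝ) : ℝ := ∫ y in (0:ℝ)..x, v y

/-- `v` is an integrable value density on `[0,1]`, bounded between `lo` and `hi`,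
integrating to `1`. -/
def IsDensity (lo hi : ℝ) (v : ℝ → ℝ) : Prop :=
  IntervalIntegrable v volume 0 1 ∧
  (∀ x ∈ Set.Icc (0:ℝ) 1, lo ≤ v x ∧ v x ≤ hi) ∧
  (∫ y in (0:ℝ)..1, v y) = 1

/-- Alice's round-`t` utility: if Bob picks `L` she gets `[a_t,1]`, else `[0,a_t]`. -/
noncomputable def uA (vA : ℝ → ℝ) (a : ℕ → ℝ) (b : ℕ → Choice) (t : ℕ) : ℝ :=
  if b t = Choice.L then 1 - cumul vA (a t) else cumul vA (a t)

/-- Bob's round-`t` utility: if he picks `L` he gets `[0,a_t]`, else `[a_t,1]`. -/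
noncomputable def uB (vB : ℝ → ℝ) (a : ℕ → ℝ) (b : ℕ → Choice) (t : ℕ) : ℝ :=
  if b t = Choice.L then cumul vB (a t) else 1 - cumul vB (a t)

/-- `α_t = r_t − ℓ_t`: number of `R` choices minus number of `L` choices up to round `t`. -/
noncomputable def alphaFP (b : ℕ → Choice) (t : ℕ) : ℝ :=
  ∑ i ∈ Finset.Icc 1 t, (if b i = Choice.R then (1:ℝ) else -1)

/-- `β_t = Σ_{i=1}^t (2 V_B(a_i) − 1)`. -/
noncomputable def betaFP (vB : ℝ → ℝ) (a : ℕ → ℝ) (t : ℕ) : ℝ :=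
  ∑ i ∈ Finset.Icc 1 t, (2 * cumul vB (a i) - 1)

/-- The radius `ρ_t = |α_t| + |β_t|`. -/
noncomputable def rhoFP (vB : ℝ → ℝ) (a : ℕ → ℝ) (b : ℕ → Choice) (t : ℕ) : ℝ :=
  |alphaFP b t| + |betaFP vB a t|

/-- `(a,b)` is a fictitious-play trajectory. -/
def IsFictitiousPlay (vB : ℝ → ℝ) (a : ℕ → ℝ) (b : ℕ → Choice) : Prop :=
  ∀ t : ℕ,
    (0 < alphaFP b t → a (t+1) = 1) ∧
    (alphaFP b t < 0 → a (t+1) = 0) ∧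
    (0 < betaFP vB a t → b (t+1) = Choice.L) ∧
    (betaFP vB a t < 0 → b (t+1) = Choice.R)

/-- Round `t` is axis-crossing. -/
def AxisCrossing (vB : ℝ → ℝ) (a : ℕ → ℝ) (b : ℕ → Choice) (t : ℕ) : Prop :=
  alphaFP b t = 0 ∨
  (betaFP vB a t ≤ 0 ∧ 0 < betaFP vB a (t+1)) ∨
  (0 ≤ betaFP vB a t ∧ betaFP vB a (t+1) < 0)

namespace FPaux

structure Core where
  A : ℕ → ℝ
  B : ℕ → ℝ
  x : ℕ → ℝ
  d : ℕ → ℝ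
  s : ℕ → ℝ
  hA0 : A 0 = 0
  hB0 : B 0 = 0
  hs : ∀ t : ℕ, s (t+1) = 1 ∨ s (t+1) = -1
  hAstep : ∀ t : ℕ, A (t+1) = A t + s (t+1)
  hBstep : ∀ t : ℕ, B (t+1) = B t + (2 * x (t+1) - 1)
  hx0 : ∀ t : ℕ, 0 ≤ x (t+1)
  hx1 : ∀ t : ℕ, x (t+1) ≤ 1
  hd0 : ∀ t : ℕ, -1 ≤ d (t+1)
  hd1 : ∀ t : ℕ, d (t+1) ≤ 1
  hfx1 : ∀ t : ℕ, 0 < A t → x (t+1) = 1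
  hfx0 : ∀ t : ℕ, A t < 0 → x (t+1) = 0
  hfsL : ∀ t : ℕ, 0 < B t → s (t+1) = -1
  hfsR : ∀ t : ℕ, B t < 0 → s (t+1) = 1
  hxd0 : ∀ t : ℕ, x (t+1) = 0 → d (t+1) = -1
  hxd1 : ∀ t : ℕ, x (t+1) = 1 → d (t+1) = 1

namespace Core

variable (C : Core)

noncomputable def rho (t : ℕ) : ℝ := |C.A t| + |C.B t|

lemma A_int : ∀ t : ℕ, ∃ n : ℤ, C.A t = n := by
  intro t
  induction t with
  | zero => exact ⟨0, by simp [C.hA0]⟩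
  | succ t ih =>
    obtain ⟨n, hn⟩ := ih
    rcases C.hs t with h | h
    · exact ⟨n + 1, by rw [C.hAstep t, hn, h]; push_cast; ring⟩
    · exact ⟨n - 1, by rw [C.hAstep t, hn, h]; push_cast; ring⟩

lemma A_abs_ge_one {t : ℕ} (h : C.A t ≠ 0) : 1 ≤ |C.A t| := by
  obtain ⟨n, hn⟩ := C.A_int t
  rw [hn] at h ⊢
  have : n ≠ 0 := by exact_mod_cast h
  calc (1:ℝ) = ((1:ℤ) : ℝ) := by norm_num
  _ ≤ |(n:ℝ)| := by
      rw [← Int.cast_abs]; exact_mod_cast Int.one_le_abs this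

lemma s_abs (t : ℕ) : |C.s (t+1)| = 1 := by
  rcases C.hs t with h | h <;> simp [h]

/-- trichotomy helper facts used across the case analyses -/
lemma dA_pos {t : ℕ} (h : 0 < C.A t) : |C.A (t+1)| - |C.A t| = C.s (t+1) := by
  have h1 : 1 ≤ |C.A t| := C.A_abs_ge_one (ne_of_gt h)
  rw [abs_of_pos h] at h1
  have hA' : C.A (t+1) = C.A t + C.s (t+1) := C.hAstep t
  rcases C.hs t with hss | hss
  · rw [hA', hss, abs_of_pos h, abs_of_pos (by linarith)]; ring
  · rw [hA', hss, abs_of_pos h, abs_of_nonneg (by linarith)]; ring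

lemma dA_neg {t : ℕ} (h : C.A t < 0) : |C.A (t+1)| - |C.A t| = -C.s (t+1) := by
  have h1 : 1 ≤ |C.A t| := C.A_abs_ge_one (ne_of_lt h)
  rw [abs_of_neg h] at h1
  have hA' : C.A (t+1) = C.A t + C.s (t+1) := C.hAstep t
  rcases C.hs t with hss | hss
  · rw [hA', hss, abs_of_neg h, abs_of_nonpos (by linarith)]; ring
  · rw [hA', hss, abs_of_neg h, abs_of_neg (by linarith)]; ring

lemma dA_zero {t : ℕ} (h : C.A t = 0) : |C.A (t+1)| - |C.A t| = 1 := by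
  have hA' : C.A (t+1) = C.A t + C.s (t+1) := C.hAstep t
  rcases C.hs t with hss | hss <;>
  · rw [hA', hss, h]; norm_num

lemma F1 (t : ℕ) : C.s (t+1) * (2 * C.x (t+1) - 1) ≤ |C.A (t+1)| - |C.A t| := by
  rcases lt_trichotomy (C.A t) 0 with h | h | h
  · rw [C.dA_neg h, C.hfx0 t h]
    rcases C.hs t with hss | hss <;> rw [hss] <;> norm_num
  · rw [C.dA_zero h]
    have := C.hx0 t; have := C.hx1 t
    rcases C.hs t with hss | hss <;> rw [hss] <;> nlinarith
  · rw [C.dA_pos h, C.hfx1 t h]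
    rcases C.hs t with hss | hss <;> rw [hss] <;> norm_num

lemma F2 (t : ℕ) : C.s (t+1) * C.d (t+1) ≤ |C.A (t+1)| - |C.A t| := by
  rcases lt_trichotomy (C.A t) 0 with h | h | h
  · rw [C.dA_neg h, C.hxd0 t (C.hfx0 t h)]
    rcases C.hs t with hss | hss <;> rw [hss] <;> norm_num
  · rw [C.dA_zero h]
    have := C.hd0 t; have := C.hd1 t
    rcases C.hs t with hss | hss <;> rw [hss] <;> nlinarith
  · rw [C.dA_pos h, C.hxd1 t (C.hfx1 t h)]
    rcases C.hs t with hss | hss <;> rw [hss] <;> norm_num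

lemma F3 (t : ℕ) : -(C.s (t+1) * (2 * C.x (t+1) - 1)) ≤ |C.B (t+1)| - |C.B t| := by
  have hB' : C.B (t+1) = C.B t + (2 * C.x (t+1) - 1) := C.hBstep t
  have h1 : C.B t + (2 * C.x (t+1) - 1) ≤ |C.B (t+1)| := by rw [hB']; exact le_abs_self _
  have h2 : -(C.B t + (2 * C.x (t+1) - 1)) ≤ |C.B (t+1)| := by rw [hB']; exact neg_le_abs _
  rcases lt_trichotomy (C.B t) 0 with h | h | h
  · rw [C.hfsR t h, abs_of_neg h]; nlinarith
  · rw [h]; simp only [abs_zero]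
    have := C.hx0 t; have := C.hx1 t
    rcases C.hs t with hss | hss <;> rw [hss] <;> [skip; skip] <;> nlinarith
  · rw [C.hfsL t h, abs_of_pos h]; nlinarith

lemma rho_mono (t : ℕ) : C.rho t ≤ C.rho (t+1) := by
  unfold rho
  have hB' : C.B (t+1) = C.B t + (2 * C.x (t+1) - 1) := C.hBstep t
  have h1 : C.B t + (2 * C.x (t+1) - 1) ≤ |C.B (t+1)| := by rw [hB']; exact le_abs_self _
  have h2 : -(C.B t + (2 * C.x (t+1) - 1)) ≤ |C.B (t+1)| := by rw [hB']; exact neg_le_abs _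
  have hx0 := C.hx0 t; have hx1 := C.hx1 t
  have hBt1 : |C.B t| - 1 ≤ |C.B (t+1)| := by
    rcases abs_cases (C.B t) with ⟨he, _⟩ | ⟨he, _⟩ <;> nlinarith
  rcases lt_trichotomy (C.A t) 0 with h | h | h
  · have h3 := C.dA_neg h
    rw [C.hfx0 t h] at h1 h2
    rcases lt_trichotomy (C.B t) 0 with hb | hb | hb
    · rw [C.hfsR t hb] at h3; rw [abs_of_neg hb] at *; nlinarith
    · have hb0 : |C.B t| = 0 := by rw [hb, abs_zero]
      rcases C.hs t with hss | hss <;> rw [hss] at h3 <;> nlinarith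
    · rw [C.hfsL t hb] at h3; rw [abs_of_pos hb] at *; nlinarith
  · have h3 := C.dA_zero h
    nlinarith
  · have h3 := C.dA_pos h
    rw [C.hfx1 t h] at h1 h2
    rcases lt_trichotomy (C.B t) 0 with hb | hb | hb
    · rw [C.hfsR t hb] at h3; rw [abs_of_neg hb] at *; nlinarith
    · have hb0 : |C.B t| = 0 := by rw [hb, abs_zero]
      rcases C.hs t with hss | hss <;> rw [hss] at h3 <;> nlinarith
    · rw [C.hfsL t hb] at h3; rw [abs_of_pos hb] at *; nlinarith

lemma rho_nonneg (t : ℕ) : 0 ≤ C.rho t := by unfold rho; positivity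

lemma rho_step (t : ℕ) : C.rho (t+1) ≤ C.rho t + 2 := by
  unfold rho
  have hB' : C.B (t+1) = C.B t + (2 * C.x (t+1) - 1) := C.hBstep t
  have hA' : C.A (t+1) = C.A t + C.s (t+1) := C.hAstep t
  have hx0 := C.hx0 t; have hx1 := C.hx1 t
  have h1 : |C.B (t+1)| ≤ |C.B t| + 1 := by
    rw [hB']
    calc |C.B t + (2 * C.x (t+1) - 1)| ≤ |C.B t| + |2 * C.x (t+1) - 1| := abs_add_le _ _
    _ ≤ |C.B t| + 1 := by
        have : |2 * C.x (t+1) - 1| ≤ 1 := abs_le.2 ⟨by linarith, by linarith⟩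
        linarith
  have h2 : |C.A (t+1)| ≤ |C.A t| + 1 := by
    rw [hA']
    calc |C.A t + C.s (t+1)| ≤ |C.A t| + |C.s (t+1)| := abs_add_le _ _
    _ = |C.A t| + 1 := by rw [C.s_abs]
  linarith

lemma rho_le (t : ℕ) : C.rho t ≤ 2 * t := by
  induction t with
  | zero => simp [rho, C.hA0, C.hB0]
  | succ t ih =>
    have := C.rho_step t
    push_cast
    push_cast at ih
    linarith

noncomputable def phi (a b : ℝ) : ℝ :=
  if a = 0 ∧ b = 0 then 2
  else if 0 < a ∧ b < 0 then 3 - 3 * Int.fract b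
  else if a < 0 ∧ 0 < b then 3 - 3 * Int.fract (-b)
  else 3 + 3 * Int.fract |b|

lemma phi_nonneg (a b : ℝ) : 0 ≤ phi a b := by
  unfold phi
  have h1 : Int.fract b < 1 := Int.fract_lt_one b
  have h2 : Int.fract (-b) < 1 := Int.fract_lt_one (-b)
  have h3 : 0 ≤ Int.fract |b| := Int.fract_nonneg _
  split_ifs <;> linarith

lemma phi_le (a b : ℝ) : phi a b ≤ 6 := by
  unfold phi
  have h1 : 0 ≤ Int.fract b := Int.fract_nonneg b
  have h2 : 0 ≤ Int.fract (-b) := Int.fract_nonneg (-b)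
  have h3 : Int.fract |b| < 1 := Int.fract_lt_one _
  split_ifs <;> linarith

def Cross (t : ℕ) : Prop :=
  C.A t = 0 ∨ (C.B t ≤ 0 ∧ 0 < C.B (t+1)) ∨ (0 ≤ C.B t ∧ C.B (t+1) < 0)

lemma cross_zero : C.Cross 0 := Or.inl C.hA0

lemma nocross {t : ℕ} (h : ¬ C.Cross t) : C.rho (t+1) = C.rho t := by
  unfold Cross at h
  push_neg at h
  obtain ⟨hA, hup, hdn⟩ := h
  have hB' : C.B (t+1) = C.B t + (2 * C.x (t+1) - 1) := C.hBstep t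
  unfold rho
  rcases lt_trichotomy (C.A t) 0 with ha | ha | ha
  · have hx := C.hfx0 t ha
    rw [hx] at hB'
    have hDA := C.dA_neg ha
    rcases lt_trichotomy (C.B t) 0 with hb | hb | hb
    · have hs := C.hfsR t hb
      rw [hs] at hDA
      have hb' : C.B (t+1) < 0 := by rw [hB']; linarith
      rw [abs_of_neg hb, abs_of_neg hb', hB']; linarith
    · exfalso
      have := hdn (le_of_eq hb.symm)
      rw [hB', hb] at this; linarith
    · have hs := C.hfsL t hb
      rw [hs] at hDA
      have hb' : 0 ≤ C.B (t+1) := hdn (le_of_lt hb)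
      rw [abs_of_pos hb, abs_of_nonneg hb', hB']; linarith
  · exact absurd ha hA
  · have hx := C.hfx1 t ha
    rw [hx] at hB'
    have hDA := C.dA_pos ha
    rcases lt_trichotomy (C.B t) 0 with hb | hb | hb
    · have hs := C.hfsR t hb
      rw [hs] at hDA
      have hb' : C.B (t+1) ≤ 0 := hup (le_of_lt hb)
      rw [abs_of_neg hb, abs_of_nonpos hb', hB']; linarith
    · exfalso
      have := hup hb.le
      rw [hB', hb] at this; linarith
    · have hs := C.hfsL t hb
      rw [hs] at hDA
      have hb' : 0 < C.B (t+1) := by rw [hB']; linarith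
      rw [abs_of_pos hb, abs_of_pos hb', hB']; linarith

lemma SB_ub : ∀ T : ℕ, ∑ i ∈ Finset.range T, (-(C.s (i+1) * (2 * C.x (i+1) - 1))) ≤ |C.B T| := by
  intro T
  induction T with
  | zero => simp [C.hB0]
  | succ T ih =>
    rw [Finset.sum_range_succ]
    have := C.F3 T
    linarith

lemma SB_lb : ∀ T : ℕ, |C.B T| - C.rho T ≤ ∑ i ∈ Finset.range T, (-(C.s (i+1) * (2 * C.x (i+1) - 1))) := by
  intro T
  induction T with
  | zero => simp [C.hB0, rho, C.hA0]
  | succ T ih =>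
    rw [Finset.sum_range_succ]
    have h1 := C.F1 T
    unfold rho at *
    linarith

lemma SB_bound (T : ℕ) :
    |∑ i ∈ Finset.range T, (-(C.s (i+1) * (2 * C.x (i+1) - 1)))| ≤ C.rho T := by
  have h1 := C.SB_ub T
  have h2 := C.SB_lb T
  have h3 : |C.B T| ≤ C.rho T := by
    unfold rho
    have : 0 ≤ |C.A T| := abs_nonneg _
    linarith
  have h4 : 0 ≤ |C.B T| := abs_nonneg _
  rw [abs_le]
  constructor <;> linarith


lemma fract_add_one (y : ℝ) : Int.fract (y + 1) = Int.fract y := by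
  simpa using Int.fract_add_int y 1

lemma fract_sub_one (y : ℝ) : Int.fract (y - 1) = Int.fract y := by
  simpa using Int.fract_add_int y (-1)

lemma fract_neg_of_ne {y : ℝ} (h : Int.fract y ≠ 0) : Int.fract (-y) = 1 - Int.fract y :=
  Int.fract_neg h

lemma fract_neg_of_eq {y : ℝ} (h : Int.fract y = 0) : Int.fract (-y) = 0 := by
  have hy : y = (⌊y⌋ : ℝ) := by
    have := Int.floor_add_fract y
    rw [h] at this; linarith
  rw [hy, ← Int.cast_neg, Int.fract_intCast]

lemma fract_self_of {y : ℝ} (h0 : 0 ≤ y) (h1 : y < 1) : Int.fract y = y :=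
  Int.fract_eq_self.2 ⟨h0, h1⟩

lemma fract_of_neg {y : ℝ} (h0 : -1 ≤ y) (h1 : y < 0) : Int.fract y = y + 1 := by
  have hf : ⌊y⌋ = -1 := Int.floor_eq_iff.2 (by constructor <;> push_cast <;> linarith)
  rw [Int.fract, hf]
  push_cast; ring

lemma fract_neg_one : Int.fract (-1 : ℝ) = 0 := by
  rw [show (-1 : ℝ) = ((-1 : ℤ) : ℝ) by norm_num, Int.fract_intCast]

lemma phi_zz : phi 0 0 = 2 := by unfold phi; simp

lemma phi_away_p {a b : ℝ} (ha : 0 ≤ a) (hb : 0 < b) : phi a b = 3 + 3 * Int.fract b := by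
  unfold phi
  rw [if_neg (by rintro ⟨_, h⟩; linarith), if_neg (by rintro ⟨_, h⟩; linarith),
    if_neg (by rintro ⟨h, _⟩; linarith), abs_of_pos hb]

lemma phi_away_n {a b : ℝ} (ha : a ≤ 0) (hb : b < 0) : phi a b = 3 + 3 * Int.fract (-b) := by
  unfold phi
  rw [if_neg (by rintro ⟨_, h⟩; linarith), if_neg (by rintro ⟨h, _⟩; linarith),
    if_neg (by rintro ⟨_, h⟩; linarith), abs_of_neg hb]

lemma phi_axis {a : ℝ} (ha : a ≠ 0) : phi a 0 = 3 := by
  unfold phi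
  rw [if_neg (by rintro ⟨h, _⟩; exact ha h), if_neg (by rintro ⟨_, h⟩; linarith),
    if_neg (by rintro ⟨_, h⟩; linarith)]
  simp

lemma phi_tow_p {a b : ℝ} (ha : a < 0) (hb : 0 < b) : phi a b = 3 - 3 * Int.fract (-b) := by
  unfold phi
  rw [if_neg (by rintro ⟨h, _⟩; linarith), if_neg (by rintro ⟨h, _⟩; linarith),
    if_pos ⟨ha, hb⟩]

lemma phi_tow_n {a b : ℝ} (ha : 0 < a) (hb : b < 0) : phi a b = 3 - 3 * Int.fract b := by
  unfold phi
  rw [if_neg (by rintro ⟨h, _⟩; linarith), if_pos ⟨ha, hb⟩]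

lemma phi_neg_neg (a b : ℝ) : phi (-a) (-b) = phi a b := by
  have hne : ∀ z : ℝ, z ≠ 0 → -z ≠ 0 := fun z hz => by simpa using hz
  rcases lt_trichotomy a 0 with ha | ha | ha
  · rcases lt_trichotomy b 0 with hb | hb | hb
    · rw [phi_away_n (le_of_lt ha) hb, phi_away_p (by linarith) (by linarith)]
    · rw [hb, neg_zero, phi_axis (ne_of_lt ha), phi_axis (hne a (ne_of_lt ha))]
    · rw [phi_tow_p ha hb, phi_tow_n (by linarith) (by linarith)]
  · rw [ha, neg_zero]
    rcases lt_trichotomy b 0 with hb | hb | hb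
    · rw [phi_away_n (le_of_eq rfl) hb, phi_away_p (le_of_eq rfl) (by linarith)]
    · rw [hb, neg_zero]
    · rw [phi_away_p (le_of_eq rfl) hb, phi_away_n (le_of_eq rfl) (by linarith), neg_neg]

  · rcases lt_trichotomy b 0 with hb | hb | hb
    · rw [phi_tow_n ha hb, phi_tow_p (by linarith) (by linarith), neg_neg]
    · rw [hb, neg_zero, phi_axis (ne_of_gt ha), phi_axis (hne a (ne_of_gt ha))]
    · rw [phi_away_p (le_of_lt ha) hb, phi_away_n (by linarith) (by linarith), neg_neg]


lemma pot_core (a b s c d : ℝ) (hs : s = 1 ∨ s = -1) (hc0 : -1 ≤ c) (hc1 : c ≤ 1)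
    (hd0 : -1 ≤ d) (hd1 : d ≤ 1)
    (hfx1 : 0 < a → c = 1) (hfx0 : a < 0 → c = -1)
    (hfsL : 0 < b → s = -1) (hfsR : b < 0 → s = 1)
    (hxd0 : c = -1 → d = -1) (hxd1 : c = 1 → d = 1)
    (hInt : a = 0 ∨ 1 ≤ |a|) (hbge : 0 ≤ b) :
    (|a + s| - |a| - s * d) + phi (a + s) (b + c) - phi a b
      ≤ 3 * ((|a + s| + |b + c|) - (|a| + |b|)) := by
  have hf0 : (0:ℝ) ≤ Int.fract b := Int.fract_nonneg b
  have hf1 : Int.fract b < 1 := Int.fract_lt_one b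
  rcases hInt with ha0 | haInt
  · -- a = 0
    subst ha0
    simp only [abs_zero, zero_add]
    rcases eq_or_lt_of_le hbge with hb0 | hbp
    · -- b = 0
      have hb0 : b = 0 := hb0.symm
      subst hb0
      rw [phi_zz]
      rcases hs with hs1 | hs1 <;> subst hs1 <;>
        simp only [zero_add, abs_one, abs_zero, one_mul, neg_mul, abs_neg]
      · -- s = 1
        rcases lt_trichotomy c 0 with hcs | hcs | hcs
        · rcases eq_or_lt_of_le hc0 with hce | hce
          · have hd := hxd0 hce.symm
            rw [← hce, phi_tow_n one_pos (by norm_num : (-1:ℝ) < 0), fract_neg_one]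
            norm_num
            linarith
          · rw [phi_tow_n one_pos hcs, fract_of_neg hc0 hcs, abs_of_neg hcs]
            linarith
        · subst hcs
          rw [phi_axis (by norm_num : (1:ℝ) ≠ 0)]
          simp only [abs_zero]; linarith
        · rcases eq_or_lt_of_le hc1 with hce | hce
          · have hd := hxd1 hce
            subst hce
            rw [phi_away_p (by norm_num : (0:ℝ) ≤ 1) one_pos, Int.fract_one]
            norm_num
            linarith
          · rw [phi_away_p (by norm_num : (0:ℝ) ≤ 1) hcs, fract_self_of (le_of_lt hcs) hce,
              abs_of_pos hcs]
            linarith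
      · -- s = -1
        rcases lt_trichotomy c 0 with hcs | hcs | hcs
        · rcases eq_or_lt_of_le hc0 with hce | hce
          · have hd := hxd0 hce.symm
            rw [← hce, phi_away_n (by norm_num : (-1:ℝ) ≤ 0) (by norm_num : (-1:ℝ) < 0),
              show -(-1:ℝ) = 1 by norm_num, Int.fract_one]
            norm_num
            linarith
          · rw [phi_away_n (by norm_num : (-1:ℝ) ≤ 0) hcs,
              fract_self_of (by linarith) (by linarith), abs_of_neg hcs]
            linarith
        · subst hcs
          rw [phi_axis (by norm_num : (-1:ℝ) ≠ 0)]
          simp only [abs_zero]; linarith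
        · rcases eq_or_lt_of_le hc1 with hce | hce
          · have hd := hxd1 hce
            subst hce
            rw [phi_tow_p (by norm_num : (-1:ℝ) < 0) one_pos, fract_neg_one]
            norm_num
            linarith
          · have hfc : Int.fract c = c := fract_self_of (le_of_lt hcs) hce
            rw [phi_tow_p (by norm_num : (-1:ℝ) < 0) hcs,
              fract_neg_of_ne (by rw [hfc]; exact ne_of_gt hcs), hfc,
              abs_of_pos hcs]
            linarith
    · -- b > 0, a = 0 : the event case
      have hsm := hfsL hbp
      subst hsm
      rw [abs_of_neg (by norm_num : (-1:ℝ) < 0), phi_away_p le_rfl hbp,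
        abs_of_pos hbp]
      rcases lt_trichotomy (b + c) 0 with hb' | hb' | hb'
      · -- b' < 0
        have hble : b < 1 := by linarith
        have hfb : Int.fract b = b := fract_self_of hbge hble
        have h1 : -(b+c) ≤ 1 - b := by linarith
        have h2 : -(b+c) < 1 := by linarith
        rw [phi_away_n (by norm_num : (-1:ℝ) ≤ 0) hb', abs_of_neg hb',
          fract_self_of (by linarith) h2, hfb]
        linarith
      · -- b' = 0
        rw [hb', phi_axis (by norm_num : (-1:ℝ) ≠ 0)]
        have hble : b ≤ 1 := by linarith
        rcases eq_or_lt_of_le hble with hbe | hbl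
        · have hcm : c = -1 := by linarith
          have hd := hxd0 hcm
          rw [hbe, Int.fract_one]
          simp only [abs_zero]; linarith
        · rw [fract_self_of hbge hbl]
          simp only [abs_zero]; linarith
      · -- b' > 0
        rw [phi_tow_p (by norm_num : (-1:ℝ) < 0) hb', abs_of_pos hb']
        set K : ℤ := ⌊b⌋ - ⌊b + c⌋ with hK
        have hKr : Int.fract (b + c) = Int.fract b + c + (K : ℝ) := by
          unfold Int.fract
          push_cast [hK]
          ring
        have hg0 : (0:ℝ) ≤ Int.fract (b+c) := Int.fract_nonneg _
        have hg1 : Int.fract (b+c) < 1 := Int.fract_lt_one _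
        have hKl : (-2 : ℝ) < (K:ℝ) := by linarith
        have hKu : (K:ℝ) < 2 := by linarith
        have hKl' : (-2 : ℤ) < K := by exact_mod_cast hKl
        have hKu' : K < 2 := by exact_mod_cast hKu
        by_cases hz : Int.fract (b + c) = 0
        · rw [fract_neg_of_eq hz]
          rw [hz] at hKr
          interval_cases K
          · simp only [Int.cast_neg, Int.cast_one] at hKr; linarith
          · simp only [Int.cast_zero] at hKr; linarith
          · simp only [Int.cast_one] at hKr
            have hfb0 : Int.fract b = 0 := by linarith
            have hcm : c = -1 := by linarith
            have hd := hxd0 hcm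
            linarith
        · rw [fract_neg_of_ne hz, hKr]
          have : (-2 : ℝ) ≤ (K:ℝ) + 1 - 1 - 1 + 1 := by linarith
          interval_cases K <;> simp only [Int.cast_neg, Int.cast_one, Int.cast_zero] <;> linarith
  · -- |a| ≥ 1
    rcases abs_cases a with ⟨hae, hage⟩ | ⟨hae, hal⟩
    · -- a ≥ 1
      have hap : 0 < a := by rw [hae] at haInt; linarith
      have ha1 : 1 ≤ a := by linarith [hae ▸ haInt]
      have hc := hfx1 hap
      subst hc
      have hd := hxd1 rfl
      subst hd
      rcases hs with hs1 | hs1 <;> subst hs1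
      · -- s = 1 : must have b = 0
        have hb0 : b = 0 := by
          by_contra h
          have : 0 < b := lt_of_le_of_ne hbge (Ne.symm h)
          have := hfsL this; norm_num at this
        subst hb0
        rw [phi_axis (ne_of_gt hap), abs_of_pos hap, abs_of_pos (by linarith : (0:ℝ) < a + 1)]
        rw [phi_away_p (by linarith) (by norm_num : (0:ℝ) < 0 + 1)]
        simp only [zero_add, Int.fract_one, abs_zero, abs_one]
        linarith
      · -- s = -1
        rw [abs_of_pos hap, abs_of_nonneg (by linarith : (0:ℝ) ≤ a + -1)]
        rcases eq_or_lt_of_le hbge with hb0 | hbp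
        · rw [← hb0, phi_axis (ne_of_gt hap),
            phi_away_p (by linarith) (by norm_num : (0:ℝ) < 0 + 1)]
          simp only [zero_add, Int.fract_one, abs_zero, abs_one]
          linarith
        · rw [phi_away_p (le_of_lt hap) hbp, phi_away_p (by linarith) (by linarith : (0:ℝ) < b + 1),
            abs_of_pos hbp, abs_of_pos (by linarith : (0:ℝ) < b + 1),
            show b + 1 = b + (1:ℤ) by push_cast; ring, Int.fract_add_intCast]
          push_cast
          linarith
    · -- a ≤ -1
      have han : a < 0 := by rw [hae] at haInt; linarith
      have ha1 : a ≤ -1 := by linarith [hae ▸ haInt]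
      have hc := hfx0 han
      subst hc
      have hd := hxd0 rfl
      subst hd
      rcases hs with hs1 | hs1 <;> subst hs1
      · -- s = 1 : must have b = 0
        have hb0 : b = 0 := by
          by_contra h
          have : 0 < b := lt_of_le_of_ne hbge (Ne.symm h)
          have := hfsL this; norm_num at this
        subst hb0
        rw [phi_axis (ne_of_lt han), abs_of_neg han, abs_of_nonpos (by linarith : a + 1 ≤ 0)]
        rw [phi_away_n (by linarith) (by norm_num : (0:ℝ) + -1 < 0)]
        have : -((0:ℝ) + -1) = 1 := by norm_num
        rw [this, Int.fract_one]
        rw [show |(0:ℝ) + -1| = 1 by norm_num]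
        simp only [abs_zero]
        linarith
      · -- s = -1
        rw [abs_of_neg han, abs_of_neg (by linarith : a + -1 < 0)]
        rcases eq_or_lt_of_le hbge with hb0 | hbp
        · rw [← hb0, phi_axis (ne_of_lt han),
            phi_away_n (by linarith) (by norm_num : (0:ℝ) + -1 < 0)]
          have : -((0:ℝ) + -1) = 1 := by norm_num
          rw [this, Int.fract_one]
          rw [show |(0:ℝ) + -1| = 1 by norm_num]
          simp only [abs_zero]
          linarith
        · -- b > 0, descending
          rw [phi_tow_p han hbp, abs_of_pos hbp]
          rcases lt_trichotomy (b + -1) 0 with hb' | hb' | hb'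
          · -- flip down
            have hble : b < 1 := by linarith
            have hfb : Int.fract b = b := fract_self_of hbge hble
            have hfnb : Int.fract (-b) = 1 - b := by
              rw [fract_neg_of_ne (by rw [hfb]; exact ne_of_gt hbp), hfb]
            rw [phi_away_n (by linarith) hb', abs_of_neg hb', hfnb]
            have : -(b + -1) = 1 - b := by ring
            rw [this, fract_self_of (by linarith) (by linarith)]
            linarith
          · -- lands on 0
            rw [hb', phi_axis (by intro h; linarith : a + -1 ≠ 0)]
            have hb1 : b = 1 := by linarith
            subst hb1
            have : Int.fract (-1 : ℝ) = 0 := by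
              rw [show (-1 : ℝ) = ((-1 : ℤ) : ℝ) by norm_num, Int.fract_intCast]
            rw [this]
            simp only [abs_zero]
            linarith
          · -- still positive
            rw [phi_tow_p (by linarith : a + -1 < 0) hb', abs_of_pos hb']
            have : -(b + -1) = -b + (1:ℤ) := by push_cast; ring
            rw [this, Int.fract_add_intCast]
            linarith

lemma pot_step (t : ℕ) :
    (|C.A (t+1)| - |C.A t| - C.s (t+1) * C.d (t+1))
      + phi (C.A (t+1)) (C.B (t+1)) - phi (C.A t) (C.B t)
      ≤ 3 * (C.rho (t+1) - C.rho t) := by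
  have hA' := C.hAstep t
  have hB' := C.hBstep t
  have hInt : C.A t = 0 ∨ 1 ≤ |C.A t| := by
    by_cases h : C.A t = 0
    · exact Or.inl h
    · exact Or.inr (C.A_abs_ge_one h)
  unfold rho
  rw [hA', hB']
  rcases le_or_gt 0 (C.B t) with hbge | hblt
  · exact pot_core (C.A t) (C.B t) (C.s (t+1)) (2 * C.x (t+1) - 1) (C.d (t+1))
      (C.hs t) (by linarith [C.hx0 t]) (by linarith [C.hx1 t]) (C.hd0 t) (C.hd1 t)
      (fun h => by rw [C.hfx1 t h]; ring) (fun h => by rw [C.hfx0 t h]; ring)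
      (C.hfsL t) (C.hfsR t)
      (fun h => C.hxd0 t (by linarith)) (fun h => C.hxd1 t (by linarith))
      hInt hbge
  · have H := pot_core (-(C.A t)) (-(C.B t)) (-(C.s (t+1))) (-(2 * C.x (t+1) - 1)) (-(C.d (t+1)))
      (by rcases C.hs t with h | h <;> [right; left] <;> rw [h] <;> norm_num)
      (by linarith [C.hx1 t]) (by linarith [C.hx0 t])
      (by linarith [C.hd1 t]) (by linarith [C.hd0 t])
      (fun h => by rw [C.hfx0 t (by linarith)]; ring)
      (fun h => by rw [C.hfx1 t (by linarith)]; ring)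
      (fun h => by have := C.hfsR t (by linarith); linarith)
      (fun h => by have := C.hfsL t (by linarith); linarith)
      (fun h => by have := C.hxd1 t (by linarith); linarith)
      (fun h => by have := C.hxd0 t (by linarith); linarith)
      (hInt.imp (fun h => by rw [h, neg_zero]) (fun h => by rwa [abs_neg]))
      (by linarith)
    rw [show -(C.A t) + -(C.s (t+1)) = -(C.A t + C.s (t+1)) by ring,
        show -(C.B t) + -(2 * C.x (t+1) - 1) = -(C.B t + (2 * C.x (t+1) - 1)) by ring,
        abs_neg, abs_neg, abs_neg, abs_neg, phi_neg_neg, phi_neg_neg,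
        show -(C.s (t+1)) * -(C.d (t+1)) = C.s (t+1) * C.d (t+1) by ring] at H
    exact H

lemma SA_ub : ∀ T : ℕ, ∑ i ∈ Finset.range T, C.s (i+1) * C.d (i+1) ≤ |C.A T| := by
  intro T
  induction T with
  | zero => simp [C.hA0]
  | succ T ih =>
    rw [Finset.sum_range_succ]
    have := C.F2 T
    linarith

lemma SA_pot : ∀ T : ℕ,
    |C.A T| + phi (C.A T) (C.B T) - ∑ i ∈ Finset.range T, C.s (i+1) * C.d (i+1)
      ≤ 3 * C.rho T + 2 := by
  intro T
  induction T with
  | zero =>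
    simp only [Finset.range_zero, Finset.sum_empty, C.hA0, C.hB0]
    have : phi 0 0 = 2 := by unfold phi; simp
    rw [this]
    have : C.rho 0 = 0 := by unfold rho; rw [C.hA0, C.hB0]; simp
    rw [this]; norm_num
  | succ T ih =>
    rw [Finset.sum_range_succ]
    have := C.pot_step T
    linarith

lemma SA_bound (T : ℕ) :
    |∑ i ∈ Finset.range T, C.s (i+1) * C.d (i+1)| ≤ 3 * C.rho T + 2 := by
  have h1 := C.SA_ub T
  have h2 := C.SA_pot T
  have h3 : |C.A T| ≤ C.rho T := by
    unfold rho; have : 0 ≤ |C.B T| := abs_nonneg _; linarith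
  have h4 : 0 ≤ |C.A T| := abs_nonneg _
  have h5 := phi_nonneg (C.A T) (C.B T)
  have h6 := C.rho_nonneg T
  rw [abs_le]
  constructor <;> linarith

/-- A is 1-Lipschitz -/
lemma A_lip (q : ℕ) : ∀ r : ℕ, q ≤ r → |C.A r - C.A q| ≤ (r - q : ℕ) := by
  intro r hr
  induction r with
  | zero =>
    have : q = 0 := Nat.le_zero.1 hr
    subst this; simp
  | succ r ih =>
    rcases Nat.lt_or_ge q (r+1) with h | h
    · have hq : q ≤ r := Nat.lt_succ_iff.1 h
      have h1 := ih hq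
      have h2 : C.A (r+1) = C.A r + C.s (r+1) := C.hAstep r
      have h3 : |C.s (r+1)| = 1 := C.s_abs r
      have h4 : ((r+1 : ℕ) - q : ℕ) = ((r : ℕ) - q : ℕ) + 1 := by omega
      rw [h4]
      push_cast
      calc |C.A (r+1) - C.A q| = |(C.A r - C.A q) + C.s (r+1)| := by rw [h2]; ring_nf
      _ ≤ |C.A r - C.A q| + |C.s (r+1)| := abs_add_le _ _
      _ ≤ (r - q : ℕ) + 1 := by rw [h3]; push_cast; linarith
      _ = _ := by push_cast; ring
    · have : q = r + 1 := le_antisymm hr h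
      subst this; simp

/-- between crossings, positive A stays ≥ 1 -/
lemma posA {u t : ℕ} (hno : ∀ r : ℕ, u < r → r < t → ¬ C.Cross r) :
    1 ≤ C.A (u+1) → ∀ r : ℕ, u + 1 ≤ r → r < t → 1 ≤ C.A r := by
  intro h1 r hr
  induction r, hr using Nat.le_induction with
  | base => intro _; exact h1
  | succ r hr ih =>
    intro hrt
    have hrlt : r < t := Nat.lt_of_succ_lt hrt
    have h2 := ih hrlt
    have hne : C.A (r+1) ≠ 0 := by
      intro h0
      exact hno (r+1) (by omega) hrt (Or.inl h0)
    have h3 : C.A (r+1) = C.A r + C.s (r+1) := C.hAstep r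
    have h4 : 0 ≤ C.A (r+1) := by
      rcases C.hs r with h | h <;> rw [h3, h] <;> linarith
    have h5 := C.A_abs_ge_one hne
    rw [abs_of_nonneg h4] at h5
    exact h5

/-- between crossings, negative A stays ≤ -1 -/
lemma negA {u t : ℕ} (hno : ∀ r : ℕ, u < r → r < t → ¬ C.Cross r) :
    C.A (u+1) ≤ -1 → ∀ r : ℕ, u + 1 ≤ r → r < t → C.A r ≤ -1 := by
  intro h1 r hr
  induction r, hr using Nat.le_induction with
  | base => intro _; exact h1
  | succ r hr ih =>
    intro hrt
    have hrlt : r < t := Nat.lt_of_succ_lt hrt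
    have h2 := ih hrlt
    have hne : C.A (r+1) ≠ 0 := by
      intro h0
      exact hno (r+1) (by omega) hrt (Or.inl h0)
    have h3 : C.A (r+1) = C.A r + C.s (r+1) := C.hAstep r
    have h4 : C.A (r+1) ≤ 0 := by
      rcases C.hs r with h | h <;> rw [h3, h] <;> linarith
    have h5 := C.A_abs_ge_one hne
    rw [abs_of_nonpos h4] at h5
    linarith

/-- B linear while A positive -/
lemma Blin_pos {u t : ℕ} (hno : ∀ r : ℕ, u < r → r < t → ¬ C.Cross r)
    (h1 : 1 ≤ C.A (u+1)) :
    ∀ k : ℕ, u + 1 + k ≤ t → C.B (u+1+k) = C.B (u+1) + k := by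
  intro k
  induction k with
  | zero => intro _; simp
  | succ k ih =>
    intro hk
    have hk' : u + 1 + k ≤ t := by omega
    have hik := ih (by omega)
    have hA : 1 ≤ C.A (u+1+k) := by
      rcases Nat.eq_or_lt_of_le (Nat.le_add_right (u+1) k) with h | h
      · rw [← h]; exact h1
      · exact C.posA hno h1 (u+1+k) (by omega) (by omega)
    have hx := C.hfx1 (u+1+k) (by linarith)
    have hB := C.hBstep (u+1+k)
    rw [hx] at hB
    have : u + 1 + (k+1) = (u+1+k) + 1 := by omega
    rw [this, hB, hik]
    push_cast
    ring

/-- B linear while A negative -/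
lemma Blin_neg {u t : ℕ} (hno : ∀ r : ℕ, u < r → r < t → ¬ C.Cross r)
    (h1 : C.A (u+1) ≤ -1) :
    ∀ k : ℕ, u + 1 + k ≤ t → C.B (u+1+k) = C.B (u+1) - k := by
  intro k
  induction k with
  | zero => intro _; simp
  | succ k ih =>
    intro hk
    have hik := ih (by omega)
    have hA : C.A (u+1+k) ≤ -1 := by
      rcases Nat.eq_or_lt_of_le (Nat.le_add_right (u+1) k) with h | h
      · rw [← h]; exact h1
      · exact C.negA hno h1 (u+1+k) (by omega) (by omega)
    have hx := C.hfx0 (u+1+k) (by linarith)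
    have hB := C.hBstep (u+1+k)
    rw [hx] at hB
    have : u + 1 + (k+1) = (u+1+k) + 1 := by omega
    rw [this, hB, hik]
    push_cast
    ring

/-- core of the gap lemma : NE case -/
lemma gap_NE {u t : ℕ} (ht : C.Cross t) (hut : u < t)
    (hno : ∀ r : ℕ, u < r → r < t → ¬ C.Cross r)
    (hA1 : 1 ≤ C.A (u+1)) (hB0 : 0 < C.B (u+1)) (hB1 : C.B (u+1) ≤ 1) :
    C.rho (u+1) ≤ ((t - u : ℕ) : ℝ) + 2 := by
  have hrho : C.rho (u+1) = C.A (u+1) + C.B (u+1) := by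
    unfold rho
    rw [abs_of_pos (by linarith : (0:ℝ) < C.A (u+1)), abs_of_pos hB0]
  -- key: if A t ≤ 0 then t - u ≥ A (u+1) + 1
  have hkey : C.A t ≤ 0 → C.rho (u+1) ≤ ((t - u : ℕ) : ℝ) + 2 := by
    intro hAt
    have hlip := C.A_lip (u+1) t (by omega)
    have : C.A (u+1) - C.A t ≤ |C.A t - C.A (u+1)| := by
      rw [abs_sub_comm]; exact le_abs_self _
    have hcast : ((t - (u+1) : ℕ) : ℝ) = ((t - u : ℕ) : ℝ) - 1 := by
      have : t - (u+1) = (t - u) - 1 := by omega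
      rw [this]
      have h1 : 1 ≤ t - u := by omega
      push_cast [Nat.cast_sub h1]
      ring
    rw [hcast] at hlip
    rw [hrho]
    linarith
  rcases ht with hAt | ⟨hBt, _⟩ | ⟨_, hBt1⟩
  · exact hkey (le_of_eq hAt)
  · -- B t ≤ 0 : contradiction since B is increasing
    exfalso
    have hk : t = u + 1 + (t - u - 1) := by omega
    have hB := C.Blin_pos hno hA1 (t - u - 1) (by omega)
    rw [← hk] at hB
    have : (0:ℝ) ≤ ((t - u - 1 : ℕ) : ℝ) := Nat.cast_nonneg _
    linarith [hB ▸ hBt]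
  · -- B (t+1) < 0 : forces A t ≤ 0
    have hAt : C.A t ≤ 0 := by
      by_contra h
      push_neg at h
      have hx := C.hfx1 t h
      have hB := C.hBstep t
      rw [hx] at hB
      -- B(t+1) = B t + 1 ; B t ≥ 0 from clause
      have hk : t = u + 1 + (t - u - 1) := by omega
      have hBl := C.Blin_pos hno hA1 (t - u - 1) (by omega)
      rw [← hk] at hBl
      have : (0:ℝ) ≤ ((t - u - 1 : ℕ) : ℝ) := Nat.cast_nonneg _
      nlinarith [hB ▸ hBt1]
    exact hkey hAt

/-- core of the gap lemma : NW case -/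
lemma gap_NW {u t : ℕ} (ht : C.Cross t) (hut : u < t)
    (hno : ∀ r : ℕ, u < r → r < t → ¬ C.Cross r)
    (hA1 : C.A (u+1) = -1) (hB2 : 0 < C.B (u+1)) :
    C.rho (u+1) ≤ ((t - u : ℕ) : ℝ) + 2 := by
  have hrho : C.rho (u+1) = 1 + C.B (u+1) := by
    unfold rho
    rw [hA1, abs_of_pos hB2]
    norm_num
  have hAneg : C.A (u+1) ≤ -1 := le_of_eq hA1
  rcases ht with hAt | ⟨hBt, _⟩ | ⟨hBt0, hBt1⟩
  · -- A t = 0 : needs s t = 1 hence B (t-1) ≤ 0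
    -- t ≥ u + 2 since A (u+1) = -1 ≠ 0
    have htu : u + 2 ≤ t := by
      rcases Nat.lt_or_ge (u+1) t with h | h
      · omega
      · exfalso
        have : t = u + 1 := by omega
        rw [this] at hAt
        rw [hAt] at hA1; norm_num at hA1
    -- A (t-1) ≤ -1
    have hAt1 : C.A (t-1) ≤ -1 := by
      rcases Nat.eq_or_lt_of_le (show u+1 ≤ t-1 by omega) with h | h
      · rw [← h]; exact hAneg
      · exact C.negA hno hAneg (t-1) (by omega) (by omega)
    -- step t : A t = A (t-1) + s t = 0 with A(t-1) ≤ -1 forces s t = 1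
    have hstep : C.A t = C.A (t-1) + C.s t := by
      have : t = (t-1) + 1 := by omega
      rw [this]; exact C.hAstep (t-1)
    have hst : C.s t = 1 := by
      rcases (show C.s ((t-1)+1) = 1 ∨ C.s ((t-1)+1) = -1 from C.hs (t-1)) with h | h
      · rw [show (t-1)+1 = t by omega] at h; exact h
      · rw [show (t-1)+1 = t by omega] at h
        exfalso; rw [hstep, h] at hAt; linarith
    -- s t = 1 forces B (t-1) ≤ 0
    have hBt1 : C.B (t-1) ≤ 0 := by
      by_contra h
      push_neg at h
      have := C.hfsL (t-1) h
      rw [show (t-1)+1 = t by omega] at this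
      rw [this] at hst; norm_num at hst
    -- B (t-1) = B(u+1) - (t-1-(u+1))
    have hBl := C.Blin_neg hno hAneg (t - u - 2) (by omega)
    rw [show u + 1 + (t - u - 2) = t - 1 by omega] at hBl
    have hcast : ((t - u - 2 : ℕ) : ℝ) = ((t - u : ℕ) : ℝ) - 2 := by
      have h1 : 2 ≤ t - u := by omega
      have : t - u - 2 + 2 = t - u := by omega
      calc ((t - u - 2 : ℕ) : ℝ) = ((t - u - 2 + 2 : ℕ) : ℝ) - 2 := by push_cast; ring
      _ = _ := by rw [this]
    rw [hBl, hcast] at hBt1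
    rw [hrho]
    linarith
  · -- B t ≤ 0
    have hBl := C.Blin_neg hno hAneg (t - u - 1) (by omega)
    rw [show u + 1 + (t - u - 1) = t by omega] at hBl
    have hcast : ((t - u - 1 : ℕ) : ℝ) = ((t - u : ℕ) : ℝ) - 1 := by
      have h1 : 1 ≤ t - u := by omega
      have : t - u - 1 + 1 = t - u := by omega
      calc ((t - u - 1 : ℕ) : ℝ) = ((t - u - 1 + 1 : ℕ) : ℝ) - 1 := by push_cast; ring
      _ = _ := by rw [this]
    rw [hBl, hcast] at hBt
    rw [hrho]
    linarith
  · -- 0 ≤ B t and B (t+1) < 0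
    have hBl := C.Blin_neg hno hAneg (t - u - 1) (by omega)
    rw [show u + 1 + (t - u - 1) = t by omega] at hBl
    have hcast : ((t - u - 1 : ℕ) : ℝ) = ((t - u : ℕ) : ℝ) - 1 := by
      have h1 : 1 ≤ t - u := by omega
      have : t - u - 1 + 1 = t - u := by omega
      calc ((t - u - 1 : ℕ) : ℝ) = ((t - u - 1 + 1 : ℕ) : ℝ) - 1 := by push_cast; ring
      _ = _ := by rw [this]
    have hB := C.hBstep t
    have hx0 := C.hx0 t
    have : C.B t < 1 := by linarith
    rw [hBl, hcast] at this
    rw [hrho]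
    linarith

/-- the mirrored trajectory -/
def neg (C : Core) : Core where
  A := fun t => -(C.A t)
  B := fun t => -(C.B t)
  x := fun t => 1 - C.x t
  d := fun t => -(C.d t)
  s := fun t => -(C.s t)
  hA0 := by simp [C.hA0]
  hB0 := by simp [C.hB0]
  hs := fun t => by
                    rcases C.hs t with h | h
                    · right; rw [h]
                    · left; rw [h]; norm_num
  hAstep := fun t => by have := C.hAstep t; linarith
  hBstep := fun t => by have := C.hBstep t; linarith
  hx0 := fun t => by have := C.hx1 t; linarith
  hx1 := fun t => by have := C.hx0 t; linarith
  hd0 := fun t => by have := C.hd1 t; linarith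
  hd1 := fun t => by have := C.hd0 t; linarith
  hfx1 := fun t h => by have := C.hfx0 t (by linarith); linarith
  hfx0 := fun t h => by have := C.hfx1 t (by linarith); linarith
  hfsL := fun t h => by have := C.hfsR t (by linarith); linarith
  hfsR := fun t h => by have := C.hfsL t (by linarith); linarith
  hxd0 := fun t h => by have := C.hxd1 t (by linarith); linarith
  hxd1 := fun t h => by have := C.hxd0 t (by linarith); linarith

lemma neg_rho (t : ℕ) : (C.neg).rho t = C.rho t := by
  unfold rho neg
  dsimp only
  rw [abs_neg, abs_neg]

lemma neg_cross (t : ℕ) : (C.neg).Cross t ↔ C.Cross t := by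
  unfold Cross neg
  dsimp only
  constructor
  · rintro (h | ⟨h1, h2⟩ | ⟨h1, h2⟩)
    · exact Or.inl (by linarith)
    · exact Or.inr (Or.inr ⟨by linarith, by linarith⟩)
    · exact Or.inr (Or.inl ⟨by linarith, by linarith⟩)
  · rintro (h | ⟨h1, h2⟩ | ⟨h1, h2⟩)
    · exact Or.inl (by rw [h]; ring)
    · exact Or.inr (Or.inr ⟨by linarith, by linarith⟩)
    · exact Or.inr (Or.inl ⟨by linarith, by linarith⟩)

/-- half of the gap lemma, assuming B(u+1) > 0 -/
lemma gap_half {u t : ℕ} (hu : C.Cross u) (ht : C.Cross t) (hut : u < t)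
    (hno : ∀ r : ℕ, u < r → r < t → ¬ C.Cross r)
    (hBpos : 0 < C.B (u+1)) :
    C.rho (u+1) ≤ ((t - u : ℕ) : ℝ) + 2 := by
  by_cases hR : C.rho (u+1) ≤ 3
  · have : (1:ℝ) ≤ ((t - u : ℕ) : ℝ) := by
      have : 1 ≤ t - u := by omega
      exact_mod_cast this
    linarith
  push_neg at hR
  -- classification of the post-crossing state
  have hstepA : C.A (u+1) = C.A u + C.s (u+1) := C.hAstep u
  have hstepB : C.B (u+1) = C.B u + (2 * C.x (u+1) - 1) := C.hBstep u
  have hx0 := C.hx0 u; have hx1 := C.hx1 u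
  by_cases hAu : C.A u = 0
  · -- α-type crossing: |A(u+1)| = 1, so B(u+1) = rho - 1 > 2, B u > 1 > 0, s = -1
    have hA1 : C.A (u+1) = C.s (u+1) := by rw [hstepA, hAu, zero_add]
    have habs : |C.A (u+1)| = 1 := by rw [hA1]; exact C.s_abs u
    have hBval : C.B (u+1) = C.rho (u+1) - 1 := by
      unfold rho
      rw [habs, abs_of_pos hBpos]; ring
    have hBu : 0 < C.B u := by
      rw [hstepB] at hBval
      nlinarith
    have hsu := C.hfsL u hBu
    have hAm : C.A (u+1) = -1 := by rw [hA1, hsu]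
    exact C.gap_NW ht hut hno hAm hBpos
  · -- flip-type crossing : up-crossing since B(u+1) > 0
    rcases hu with h | ⟨hBu, hBu1⟩ | ⟨hBu0, hBu1⟩
    · exact absurd h hAu
    · -- up-flip: B u ≤ 0 < B (u+1) ≤ 1, A u ≥ 1, A (u+1) ≥ 1
      have hB1 : C.B (u+1) ≤ 1 := by rw [hstepB]; nlinarith
      have hAup : 0 < C.A u := by
        rcases lt_trichotomy (C.A u) 0 with h | h | h
        · exfalso
          have := C.hfx0 u h
          rw [this] at hstepB
          nlinarith
        · exact absurd h hAu
        · exact h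
      have hAu1 : 1 ≤ C.A u := by
        have := C.A_abs_ge_one hAu
        rw [abs_of_pos hAup] at this; exact this
      have hA1 : 1 ≤ C.A (u+1) := by
        -- A(u+1) = A u ± 1 ≥ 0 and ≠ 0 since rho > 3 means |A(u+1)| = rho - B(u+1) > 2
        have h2 : 0 ≤ C.A (u+1) := by
          rcases C.hs u with h | h <;> rw [hstepA, h] <;> linarith
        have h3 : C.A (u+1) ≠ 0 := by
          intro h0
          have : C.rho (u+1) = |C.B (u+1)| := by unfold rho; rw [h0]; simp
          rw [abs_of_pos hBpos] at this
          linarith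
        have := C.A_abs_ge_one h3
        rw [abs_of_nonneg h2] at this; exact this
      exact C.gap_NE ht hut hno hA1 hBpos hB1
    · -- down-flip: B(u+1) < 0 contradicts hBpos
      exfalso; linarith

/-- the gap lemma -/
lemma gap {u t : ℕ} (hu : C.Cross u) (ht : C.Cross t) (hut : u < t)
    (hno : ∀ r : ℕ, u < r → r < t → ¬ C.Cross r) :
    C.rho (u+1) ≤ ((t - u : ℕ) : ℝ) + 2 := by
  rcases lt_trichotomy (C.B (u+1)) 0 with h | h | h
  · have := C.neg.gap_half ((C.neg_cross u).2 hu) ((C.neg_cross t).2 ht) hut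
      (fun r h1 h2 hc => hno r h1 h2 ((C.neg_cross r).1 hc))
      (by show (0:ℝ) < -(C.B (u+1)); linarith)
    rwa [C.neg_rho] at this
  · -- B (u+1) = 0 : rho(u+1) = |A(u+1)| ≤ ... crossing u must be α-type
    have h1 : (1:ℝ) ≤ ((t - u : ℕ) : ℝ) := by
      have : 1 ≤ t - u := by omega
      exact_mod_cast this
    rcases hu with hAu | ⟨_, h2⟩ | ⟨_, h2⟩
    · have : C.A (u+1) = C.s (u+1) := by rw [C.hAstep u, hAu, zero_add]
      have : |C.A (u+1)| = 1 := by rw [this]; exact C.s_abs u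
      unfold rho
      rw [this, h]
      simp only [abs_zero]
      linarith
    · linarith
    · linarith
  · exact C.gap_half hu ht hut hno h

/-- rho is constant along crossing-free stretches -/
lemma rho_const {u T : ℕ} (h : ∀ r : ℕ, u < r → r < T → ¬ C.Cross r) :
    ∀ k : ℕ, u + 1 + k ≤ T → C.rho (u+1+k) = C.rho (u+1) := by
  intro k
  induction k with
  | zero => intro _; rfl
  | succ k ih =>
    intro hk
    have h1 := ih (by omega)
    have h2 : ¬ C.Cross (u+1+k) := h (u+1+k) (by omega) (by omega)
    have := C.nocross h2
    rw [show u+1+(k+1) = (u+1+k)+1 by omega, this, h1]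

/-- the radius bound -/
lemma rho_bound : ∀ t : ℕ, (C.rho t)^2 + 6 * C.rho t ≤ 10 * t + 60 := by
  intro t
  induction t using Nat.strong_induction_on with
  | _ t IH =>
    match t with
    | 0 =>
      have : C.rho 0 = 0 := by unfold rho; rw [C.hA0, C.hB0]; simp
      rw [this]; norm_num
    | (T+1) =>
      by_cases hc : C.Cross T
      · -- crossing case
        rcases Nat.eq_zero_or_pos T with hT0 | hTpos
        · subst hT0
          have h1 := C.rho_le 1
          have h2 := C.rho_nonneg 1
          push_cast at h1 ⊢
          nlinarith
        · -- find the last crossing before T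
          classical
          set u := Nat.findGreatest (fun r => C.Cross r) (T-1) with hu
          have hPu : C.Cross u := by
            apply Nat.findGreatest_spec (m := 0) (Nat.zero_le _)
            exact C.cross_zero
          have huT : u ≤ T - 1 := Nat.findGreatest_le _
          have hnob : ∀ r : ℕ, u < r → r < T → ¬ C.Cross r := by
            intro r h1 h2 hcr
            exact absurd hcr (Nat.findGreatest_is_greatest h1 (by omega))
          -- gap bound
          have hgap := C.gap hPu hc (by omega) hnob
          -- rho constant from u+1 to T
          have hconst := C.rho_const hnob (T - (u+1)) (by omega)
          rw [show u + 1 + (T - (u+1)) = T by omega] at hconst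
          -- induction hypothesis at u+1
          have hIH := IH (u+1) (by omega)
          have hle := C.rho_le (u+1)
          have hstep := C.rho_step T
          have hnn := C.rho_nonneg (T+1)
          have hnnR := C.rho_nonneg (u+1)
          -- arithmetic
          set R := C.rho (u+1) with hR
          set r' := C.rho (T+1) with hr'
          rw [hconst] at hstep
          have hcastTu : ((T - u : ℕ) : ℝ) = (T : ℝ) - (u : ℝ) := by
            have : u ≤ T := by omega
            push_cast [Nat.cast_sub this]
            ring
          rw [hcastTu] at hgap
          push_cast at hIH hle ⊢
          -- now: r' ≤ R + 2, R² + 6R ≤ 10u + 70, R ≤ 2u+2, R ≤ T - u + 2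
          rcases le_or_gt 6 R with hR6 | hR6
          · nlinarith
          · rcases le_or_gt ((T:ℝ) + 1) 10 with hsmall | hbig
            · have h3R : 3 * R ≤ 2 * (T:ℝ) + 6 := by linarith
              nlinarith
            · nlinarith
      · -- no crossing
        have := C.nocross hc
        have hIH := IH T (by omega)
        rw [this]
        push_cast at hIH ⊢
        linarith

end Core
end FPaux

section Density

variable {δ Δ : ℝ} {v : ℝ → ℝ} (hδ : 0 < δ) (hv : IsDensity δ Δ v)

lemma cumul_zero : cumul v 0 = 0 := intervalIntegral.integral_same

lemma cumul_one (hv : IsDensity δ Δ v) : cumul v 1 = 1 := hv.2.2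

lemma intg_left (hv : IsDensity δ Δ v) {r : ℝ} (hr : r ∈ Set.Icc (0:ℝ) 1) :
    IntervalIntegrable v volume 0 r := by
  apply hv.1.mono_set
  rw [Set.uIcc_of_le hr.1, Set.uIcc_of_le (by norm_num : (0:ℝ) ≤ 1)]
  exact Set.Icc_subset_Icc le_rfl hr.2

lemma intg_right (hv : IsDensity δ Δ v) {r : ℝ} (hr : r ∈ Set.Icc (0:ℝ) 1) :
    IntervalIntegrable v volume r 1 := by
  apply hv.1.mono_set
  rw [Set.uIcc_of_le hr.2, Set.uIcc_of_le (by norm_num : (0:ℝ) ≤ 1)]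
  exact Set.Icc_subset_Icc hr.1 le_rfl

lemma cumul_lb (hδ : 0 < δ) (hv : IsDensity δ Δ v) {r : ℝ} (hr : r ∈ Set.Icc (0:ℝ) 1) :
    δ * r ≤ cumul v r := by
  have h1 : ∫ y in (0:ℝ)..r, (fun _ => δ) y ≤ ∫ y in (0:ℝ)..r, v y := by
    apply intervalIntegral.integral_mono_on hr.1 (intervalIntegrable_const) (intg_left hv hr)
    intro x hx
    exact (hv.2.1 x ⟨hx.1, le_trans hx.2 hr.2⟩).1
  rw [intervalIntegral.integral_const] at h1
  simpa [smul_eq_mul, mul_comm, cumul] using h1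

lemma cumul_ub (hδ : 0 < δ) (hv : IsDensity δ Δ v) {r : ℝ} (hr : r ∈ Set.Icc (0:ℝ) 1) :
    cumul v r ≤ 1 - δ * (1 - r) := by
  have hadd : cumul v r + ∫ y in r..1, v y = 1 := by
    unfold cumul
    rw [intervalIntegral.integral_add_adjacent_intervals (intg_left hv hr) (intg_right hv hr)]
    exact hv.2.2
  have h1 : ∫ y in r..(1:ℝ), (fun _ => δ) y ≤ ∫ y in r..(1:ℝ), v y := by
    apply intervalIntegral.integral_mono_on hr.2 (intervalIntegrable_const) (intg_right hv hr)
    intro x hx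
    exact (hv.2.1 x ⟨le_trans hr.1 hx.1, hx.2⟩).1
  rw [intervalIntegral.integral_const] at h1
  have : (1 - r) * δ ≤ ∫ y in r..(1:ℝ), v y := by simpa [smul_eq_mul] using h1
  nlinarith

lemma cumul_mem (hδ : 0 < δ) (hv : IsDensity δ Δ v) {r : ℝ} (hr : r ∈ Set.Icc (0:ℝ) 1) :
    cumul v r ∈ Set.Icc (0:ℝ) 1 := by
  have h1 := cumul_lb hδ hv hr
  have h2 := cumul_ub hδ hv hr
  constructor <;> nlinarith [hr.1, hr.2]

lemma cumul_eq_zero (hδ : 0 < δ) (hv : IsDensity δ Δ v) {r : ℝ} (hr : r ∈ Set.Icc (0:ℝ) 1)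
    (h : cumul v r = 0) : r = 0 := by
  have h1 := cumul_lb hδ hv hr
  nlinarith [hr.1]

lemma cumul_eq_one (hδ : 0 < δ) (hv : IsDensity δ Δ v) {r : ℝ} (hr : r ∈ Set.Icc (0:ℝ) 1)
    (h : cumul v r = 1) : r = 1 := by
  have h2 := cumul_ub hδ hv hr
  nlinarith [hr.2]

end Density

lemma sum_Icc_eq_range (f : ℕ → ℝ) (T : ℕ) :
    ∑ t ∈ Finset.Icc 1 T, f t = ∑ i ∈ Finset.range T, f (i+1) := by
  induction T with
  | zero => simp
  | succ T ih =>
    rw [Finset.sum_Icc_succ_top (by omega : 1 ≤ T + 1), Finset.sum_range_succ, ih]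


/-- Under fictitious play, for every `T ≥ 5` both players' average payoffs
are within `O(1/√T)` of `1/2`. -/
theorem fictitious_play_converges
    (δ Δ : ℝ) (hδ : 0 < δ) (hδΔ : δ ≤ Δ)
    (vA vB : ℝ → ℝ) (hA : IsDensity δ Δ vA) (hB : IsDensity δ Δ vB)
    (a : ℕ → ℝ) (b : ℕ → Choice)
    (ha : ∀ t : ℕ, 1 ≤ t → a t ∈ Set.Icc (0:ℝ) 1)
    (hfp : IsFictitiousPlay vB a b)
    (T : ℕ) (hT : 5 ≤ T) :
    |(∑ t ∈ Finset.Icc 1 T, uA vA a b t) / T - 1/2| ≤ 2 * Real.sqrt 10 / Real.sqrt T ∧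
    |(∑ t ∈ Finset.Icc 1 T, uB vB a b t) / T - 1/2| ≤ Real.sqrt 10 / Real.sqrt T := by
  classical
  have hmemB : ∀ t : ℕ, cumul vB (a (t+1)) ∈ Set.Icc (0:ℝ) 1 :=
    fun t => cumul_mem hδ hB (ha (t+1) (by omega))
  have hmemA : ∀ t : ℕ, cumul vA (a (t+1)) ∈ Set.Icc (0:ℝ) 1 :=
    fun t => cumul_mem hδ hA (ha (t+1) (by omega))
  let C : FPaux.Core :=
    { A := alphaFP b
      B := betaFP vB a
      x := fun t => cumul vB (a t)
      d := fun t => 2 * cumul vA (a t) - 1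
      s := fun t => if b t = Choice.R then 1 else -1
      hA0 := by simp [alphaFP]
      hB0 := by simp [betaFP]
      hs := fun t => by by_cases h : b (t+1) = Choice.R <;> simp [h]
      hAstep := fun t => by
        unfold alphaFP
        rw [Finset.sum_Icc_succ_top (by omega : 1 ≤ t+1)]
      hBstep := fun t => by
        unfold betaFP
        rw [Finset.sum_Icc_succ_top (by omega : 1 ≤ t+1)]
      hx0 := fun t => (hmemB t).1
      hx1 := fun t => (hmemB t).2
      hd0 := fun t => by have := (hmemA t).1; linarith
      hd1 := fun t => by have := (hmemA t).2; linarith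
      hfx1 := fun t h => by
        rw [(hfp t).1 h]
        exact cumul_one hB
      hfx0 := fun t h => by
        rw [(hfp t).2.1 h]
        exact cumul_zero
      hfsL := fun t h => by
        have := (hfp t).2.2.1 h
        simp [this]
      hfsR := fun t h => by
        have := (hfp t).2.2.2 h
        simp [this]
      hxd0 := fun t h => by
        have ha0 : a (t+1) = 0 := cumul_eq_zero hδ hB (ha (t+1) (by omega)) h
        rw [ha0, cumul_zero]
        ring
      hxd1 := fun t h => by
        have ha1 : a (t+1) = 1 := cumul_eq_one hδ hB (ha (t+1) (by omega)) h
        rw [ha1, cumul_one hA]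
        ring }
  -- extract the abstract results in explicit form
  have hρ0 : (0:ℝ) ≤ |alphaFP b T| + |betaFP vB a T| := by positivity
  have hρb : (|alphaFP b T| + |betaFP vB a T|)^2 + 6 * (|alphaFP b T| + |betaFP vB a T|)
      ≤ 10 * T + 60 := C.rho_bound T
  have hSAb : |∑ i ∈ Finset.range T,
        (if b (i+1) = Choice.R then (1:ℝ) else -1) * (2 * cumul vA (a (i+1)) - 1)|
      ≤ 3 * (|alphaFP b T| + |betaFP vB a T|) + 2 := C.SA_bound T
  have hSBb : |∑ i ∈ Finset.range T,
        (-((if b (i+1) = Choice.R then (1:ℝ) else -1) * (2 * cumul vB (a (i+1)) - 1)))|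
      ≤ |alphaFP b T| + |betaFP vB a T| := C.SB_bound T
  -- basic numeric facts
  have hT5 : (5:ℝ) ≤ (T:ℝ) := by exact_mod_cast hT
  have hT0 : (0:ℝ) < T := by linarith
  set ρ := |alphaFP b T| + |betaFP vB a T| with hρdef
  set z := Real.sqrt (10 * T) with hz_def
  have hz0 : 0 ≤ z := Real.sqrt_nonneg _
  have hz2 : z^2 = 10 * T := Real.sq_sqrt (by positivity)
  have hz7 : 7 ≤ z := by nlinarith [hz0, hz2, hT5]
  have hzz : z = Real.sqrt 10 * Real.sqrt T := Real.sqrt_mul (by norm_num) _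
  have hsT0 : 0 < Real.sqrt T := Real.sqrt_pos.2 hT0
  have hsq : Real.sqrt T * Real.sqrt T = (T:ℝ) := Real.mul_self_sqrt (le_of_lt hT0)
  constructor
  · -- Alice
    set SA := ∑ i ∈ Finset.range T,
        (if b (i+1) = Choice.R then (1:ℝ) else -1) * (2 * cumul vA (a (i+1)) - 1) with hSA_def
    have hsum : ∑ t ∈ Finset.Icc 1 T, uA vA a b t = ((T:ℝ) + SA) / 2 := by
      rw [sum_Icc_eq_range]
      have hpt : ∀ i : ℕ, uA vA a b (i+1)
          = (1 + (if b (i+1) = Choice.R then (1:ℝ) else -1) * (2 * cumul vA (a (i+1)) - 1)) / 2 := by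
        intro i
        unfold uA
        by_cases h : b (i+1) = Choice.L
        · have h2 : ¬ (b (i+1) = Choice.R) := by rw [h]; exact fun hh => Choice.noConfusion hh
          rw [if_pos h, if_neg h2]
          ring
        · have hR : b (i+1) = Choice.R := by
            cases hbk : b (i+1)
            · exact absurd hbk h
            · rfl
          rw [if_neg h, if_pos hR]
          ring
      rw [Finset.sum_congr rfl (fun i _ => hpt i), hSA_def]
      rw [← Finset.sum_div, Finset.sum_add_distrib, Finset.sum_const, Finset.card_range]
      push_cast
      ring
    have heq : (∑ t ∈ Finset.Icc 1 T, uA vA a b t) / T - 1/2 = SA / (2 * T) := by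
      rw [hsum]
      field_simp
      ring
    rw [heq, abs_div, abs_of_pos (by linarith : (0:ℝ) < 2 * T)]
    rw [div_le_iff₀ (by linarith : (0:ℝ) < 2 * T)]
    have hkey : |SA| ≤ 4 * z := by nlinarith [hSAb, hρb, hρ0, hz2, hz7, hz0]
    have hrhs : 2 * Real.sqrt 10 / Real.sqrt T * (2 * T) = 4 * z := by
      calc 2 * Real.sqrt 10 / Real.sqrt T * (2 * T)
          = 4 * Real.sqrt 10 * ((T:ℝ) / Real.sqrt T) := by ring
        _ = 4 * Real.sqrt 10 * Real.sqrt T := by rw [Real.div_sqrt]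
        _ = 4 * z := by rw [hzz]; ring
    rw [hrhs]
    exact hkey
  · -- Bob
    set SB := ∑ i ∈ Finset.range T,
        (-((if b (i+1) = Choice.R then (1:ℝ) else -1) * (2 * cumul vB (a (i+1)) - 1))) with hSB_def
    have hsum : ∑ t ∈ Finset.Icc 1 T, uB vB a b t = ((T:ℝ) + SB) / 2 := by
      rw [sum_Icc_eq_range]
      have hpt : ∀ i : ℕ, uB vB a b (i+1)
          = (1 + (-((if b (i+1) = Choice.R then (1:ℝ) else -1) * (2 * cumul vB (a (i+1)) - 1)))) / 2 := by
        intro i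
        unfold uB
        by_cases h : b (i+1) = Choice.L
        · have h2 : ¬ (b (i+1) = Choice.R) := by rw [h]; exact fun hh => Choice.noConfusion hh
          rw [if_pos h, if_neg h2]
          ring
        · have hR : b (i+1) = Choice.R := by
            cases hbk : b (i+1)
            · exact absurd hbk h
            · rfl
          rw [if_neg h, if_pos hR]
          ring
      rw [Finset.sum_congr rfl (fun i _ => hpt i), hSB_def]
      rw [← Finset.sum_div, Finset.sum_add_distrib, Finset.sum_const, Finset.card_range]
      push_cast
      ring
    have heq : (∑ t ∈ Finset.Icc 1 T, uB vB a b t) / T - 1/2 = SB / (2 * T) := by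
      rw [hsum]
      field_simp
      ring
    rw [heq, abs_div, abs_of_pos (by linarith : (0:ℝ) < 2 * T)]
    rw [div_le_iff₀ (by linarith : (0:ℝ) < 2 * T)]
    have hkey : |SB| ≤ 2 * z := by nlinarith [hSBb, hρb, hρ0, hz2, hz7, hz0]
    have hrhs : Real.sqrt 10 / Real.sqrt T * (2 * T) = 2 * z := by
      calc Real.sqrt 10 / Real.sqrt T * (2 * T)
          = 2 * Real.sqrt 10 * ((T:ℝ) / Real.sqrt T) := by ring
        _ = 2 * Real.sqrt 10 * Real.sqrt T := by rw [Real.div_sqrt]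
        _ = 2 * z := by rw [hzz]; ring
    rw [hrhs]
    exact hkey
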